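/- (Jensen-type integral) For every y ∈ ℂ, ∫₀¹ ln|e^{2πix} − y| dx = max(ln|y|, 0). -/

import Mathlib

open Real

lemma circle_avg_log (w : ℂ) (hw : ‖w‖ < 1) :
    (∫ x in (0:ℝ)..1, Real.log (‖1 - w * Complex.exp (2 * π * Complex.I * x)‖)) = 0 := by
  set f : ℂ → ℂ := fun z => Complex.log (1 - w * z) with hf
  have hslit : ∀ z : ℂ, ‖z‖ ≤ 1 → 1 - w * z ∈ Complex.slitPlane := by
    intro z hz
    have : 1 - w * z = 1 + (-(w*z)) := by ring
    rw [this]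
    apply Complex.mem_slitPlane_of_norm_lt_one
    calc ‖-(w*z)‖ = ‖w‖ * ‖z‖ := by rw [norm_neg, norm_mul]
      _ ≤ ‖w‖ * 1 := mul_le_mul_of_nonneg_left hz (norm_nonneg w)
      _ < 1 := by simpa using hw
  have hd : DifferentiableOn ℂ f (Metric.closedBall 0 1) := by
    intro z hz
    simp only [Metric.mem_closedBall, dist_zero_right] at hz
    exact (((Complex.differentiableAt_log (hslit z hz)).comp z
      (f := fun z => 1 - w * z) (by fun_prop)).differentiableWithinAt)
  have hdc : DiffContOnCl ℂ f (Metric.ball 0 1) :=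
    DifferentiableOn.diffContOnCl (by rwa [closure_ball (0:ℂ) one_ne_zero])
  have hC := hdc.circleIntegral_sub_inv_smul (w := 0) (by simp)
  have hf0 : f 0 = 0 := by simp [hf]
  rw [hf0, smul_zero] at hC
  rw [circleIntegral] at hC
  simp only [deriv_circleMap, circleMap_zero, zero_add, sub_zero, smul_eq_mul, Complex.ofReal_one, one_mul] at hC
  have hC2 : (∫ θ in (0:ℝ)..(2*π), Complex.I * f (Complex.exp (θ * Complex.I))) = 0 := by
    rw [← hC]
    apply intervalIntegral.integral_congr
    intro θ _
    have hne : Complex.exp (θ * Complex.I) ≠ 0 := Complex.exp_ne_zero _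
    field_simp
  rw [intervalIntegral.integral_const_mul] at hC2
  have hC3 : (∫ θ in (0:ℝ)..(2*π), f (Complex.exp (θ * Complex.I))) = 0 := by
    rcases mul_eq_zero.1 hC2 with h | h
    · exact absurd h Complex.I_ne_zero
    · exact h
  -- substitute θ = 2πx
  have hsub : (∫ x in (0:ℝ)..1, f (Complex.exp (2 * π * Complex.I * x)))
      = (2*π)⁻¹ • ∫ θ in (0:ℝ)..(2*π), f (Complex.exp (θ * Complex.I)) := by
    have h := intervalIntegral.integral_comp_mul_left
      (f := fun θ : ℝ => f (Complex.exp (θ * Complex.I))) (a := (0:ℝ)) (b := 1)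
      (c := 2*π) (by positivity)
    simp only [mul_zero, mul_one] at h
    rw [← h]
    apply intervalIntegral.integral_congr
    intro x _
    simp only
    congr 2
    push_cast
    ring
  rw [hC3, smul_zero] at hsub
  -- take real parts
  have hcont : Continuous fun x : ℝ => f (Complex.exp (2 * π * Complex.I * x)) := by
    rw [continuous_iff_continuousAt]
    intro x
    show ContinuousAt (fun x : ℝ => Complex.log (1 - w * Complex.exp (2 * π * Complex.I * x))) x
    exact ContinuousAt.clog (by fun_prop) (hslit _ (by
      simp [Complex.norm_exp, Complex.mul_re, Complex.mul_im]))
  have hre := Complex.reCLM.intervalIntegral_comp_comm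
    (f := fun x : ℝ => f (Complex.exp (2 * π * Complex.I * x))) (a := 0) (b := 1) (μ := by exact MeasureTheory.volume)
    (hcont.intervalIntegrable 0 1)
  rw [hsub] at hre
  simp only [Complex.reCLM_apply, Complex.zero_re] at hre
  conv_rhs => rw [← hre]
  apply intervalIntegral.integral_congr
  intro x _
  simp [hf, Complex.log_re]

lemma abs_formula (x : ℝ) :
    ‖Complex.exp (2 * π * Complex.I * x) - 1‖ = 2 * |Real.sin (π * x)| := by
  have h1 : Complex.exp (2 * π * Complex.I * x) - 1
      = Complex.ofReal (Real.cos (2*π*x) - 1) + Complex.ofReal (Real.sin (2*π*x)) * Complex.I := by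
    rw [show (2 * (π:ℂ) * Complex.I * x) = ((2*π*x : ℝ) : ℂ) * Complex.I by push_cast; ring,
      Complex.exp_mul_I, ← Complex.ofReal_cos, ← Complex.ofReal_sin]
    push_cast
    ring
  rw [h1, Complex.norm_add_mul_I]
  have h2 : (Real.cos (2*π*x) - 1)^2 + (Real.sin (2*π*x))^2 = 4 * Real.sin (π*x)^2 := by
    have hc : Real.cos (2*(π*x)) = 1 - 2 * Real.sin (π*x)^2 := by
      rw [Real.cos_two_mul']
      nlinarith [Real.sin_sq_add_cos_sq (π*x)]
    have h2x : 2*π*x = 2*(π*x) := by ring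
    rw [h2x, hc, Real.sin_two_mul]
    nlinarith [Real.sin_sq_add_cos_sq (π*x)]
  rw [h2, show 4 * Real.sin (π*x)^2 = (2*|Real.sin (π*x)|)^2 by rw [mul_pow]; rw [sq_abs]; ring]
  exact Real.sqrt_sq (by positivity)

lemma sin_lb {x : ℝ} (h0 : 0 ≤ x) (h1 : x ≤ 1) : 2*x*(1-x) ≤ Real.sin (π * x) := by
  rcases le_total x (1/2) with h | h
  · have := Real.mul_le_sin (x := π * x) (by positivity) (by nlinarith [Real.pi_pos])
    have hπ : 2 / π * (π * x) = 2 * x := by field_simp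
    nlinarith [Real.pi_pos]
  · have h2 : Real.sin (π * x) = Real.sin (π * (1 - x)) := by
      rw [← Real.sin_pi_sub]; ring_nf
    have := Real.mul_le_sin (x := π * (1-x)) (by nlinarith [Real.pi_pos]) (by nlinarith [Real.pi_pos])
    have hπ : 2 / π * (π * (1-x)) = 2 * (1-x) := by field_simp
    nlinarith [Real.pi_pos]

lemma log_int : IntervalIntegrable Real.log MeasureTheory.volume 0 1 := by
  have h := intervalIntegral.intervalIntegrable_deriv_of_nonneg (a := 0) (b := 1)
    (g := fun x => x - x * Real.log x) (g' := fun x => -Real.log x)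
    (by fun_prop)
    (fun x hx => by
      simp only [min_eq_left zero_le_one, max_eq_right zero_le_one] at hx
      have hx0 : x ≠ 0 := ne_of_gt hx.1
      have := ((hasDerivAt_id x).sub (((hasDerivAt_id x).mul (Real.hasDerivAt_log hx0))))
      rw [show -Real.log x = 1 - (1 * Real.log x + id x * x⁻¹) by
        simp only [id, one_mul, mul_inv_cancel₀ hx0]; ring]
      exact this)
    (fun x hx => by
      simp only [min_eq_left zero_le_one, max_eq_right zero_le_one] at hx
      simp only [neg_nonneg]
      exact Real.log_nonpos (le_of_lt hx.1) (le_of_lt hx.2))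
  have heq : Real.log = (-fun x => -Real.log x) := by funext x; simp
  rw [heq]
  exact h.neg

noncomputable def ff : ℝ → ℝ := fun x => Real.log (‖Complex.exp (2 * π * Complex.I * x) - 1‖)

lemma ff_int : IntervalIntegrable ff MeasureTheory.volume 0 1 := by
  rw [intervalIntegrable_iff_integrableOn_Ioc_of_le zero_le_one]
  have hg : MeasureTheory.IntegrableOn
      (fun x => Real.log 2 - Real.log x - Real.log (1 - x)) (Set.Ioc 0 1) := by
    have h1 : IntervalIntegrable (fun x : ℝ => Real.log (1 - x)) MeasureTheory.volume 0 1 := by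
      have := log_int.comp_sub_left 1
      simpa using this.symm
    have h2 : IntervalIntegrable (fun x : ℝ => Real.log 2 - Real.log x - Real.log (1 - x))
        MeasureTheory.volume 0 1 :=
      ((intervalIntegrable_const (c := Real.log 2)).sub log_int).sub h1
    rwa [intervalIntegrable_iff_integrableOn_Ioc_of_le zero_le_one] at h2
  apply MeasureTheory.Integrable.mono' hg
  · apply MeasureTheory.AEStronglyMeasurable.restrict
    exact (Real.measurable_log.comp (Continuous.measurable (continuous_norm.comp (by fun_prop)))).aestronglyMeasurable
  · have h1 : ∀ᵐ x : ℝ, x ≠ 1 := by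
      have : MeasureTheory.volume ({1} : Set ℝ) = 0 := MeasureTheory.measure_singleton 1
      exact MeasureTheory.measure_eq_zero_iff_ae_notMem.mp this
    filter_upwards [MeasureTheory.ae_restrict_of_ae h1,
      MeasureTheory.ae_restrict_mem measurableSet_Ioc] with x hx1 hxm
    have hx0 : 0 < x := hxm.1
    have hx2 : x < 1 := lt_of_le_of_ne hxm.2 hx1
    rw [ff, abs_formula]
    have hs0 : 0 < Real.sin (π * x) := by
      have := sin_lb (le_of_lt hx0) (le_of_lt hx2)
      nlinarith
    rw [abs_of_pos hs0]
    have hub : Real.log (2 * Real.sin (π * x)) ≤ Real.log 2 := by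
      apply Real.log_le_log (by positivity)
      nlinarith [Real.sin_le_one (π * x)]
    have hlb : Real.log x + Real.log (1 - x) ≤ Real.log (2 * Real.sin (π * x)) := by
      rw [← Real.log_mul (ne_of_gt hx0) (by nlinarith)]
      apply Real.log_le_log (by nlinarith)
      nlinarith [sin_lb (le_of_lt hx0) (le_of_lt hx2)]
    have hlx : Real.log x ≤ 0 := Real.log_nonpos (le_of_lt hx0) (le_of_lt hx2)
    have hl1x : Real.log (1 - x) ≤ 0 := Real.log_nonpos (by nlinarith) (by nlinarith)
    rw [Real.norm_eq_abs, abs_le]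
    constructor <;> nlinarith [Real.log_pos (by norm_num : (1:ℝ) < 2)]

lemma ff_periodic : Function.Periodic ff 1 := by
  intro x
  unfold ff
  congr 2
  push_cast
  rw [mul_add, Complex.exp_add, mul_one]
  rw [show (2 * (π:ℂ) * Complex.I) = ((2*π : ℝ):ℂ) * Complex.I by push_cast; ring,
    Complex.exp_mul_I]
  simp

lemma ff_int12 : IntervalIntegrable ff MeasureTheory.volume 1 2 := by
  have h := ff_int.comp_sub_right 1
  norm_num at h
  have he : (fun x => ff (x - 1)) = ff := funext fun x => by
    conv_rhs => rw [show x = (x - 1) + 1 by ring, ff_periodic (x-1)]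
  rwa [he] at h

lemma exp_eq_one_int {x : ℝ} (h : Complex.exp (2*π*Complex.I*x) = 1) : ∃ n : ℤ, x = n := by
  rw [Complex.exp_eq_one_iff] at h
  obtain ⟨n, hn⟩ := h
  refine ⟨n, ?_⟩
  have h2 : ((x:ℂ)) = (n:ℂ) := by
    have hne : (2*(π:ℂ)*Complex.I) ≠ 0 := by
      simp [Complex.ext_iff, Real.pi_ne_zero]
    apply mul_left_cancel₀ hne
    rw [show (2*(π:ℂ)*Complex.I) * n = n * (2*π*Complex.I) by ring, ← hn]
  exact_mod_cast h2

lemma ff_shift_int : IntervalIntegrable (fun x => ff (x + 1/2)) MeasureTheory.volume 0 1 := by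
  have h02 : IntervalIntegrable ff MeasureTheory.volume 0 2 := ff_int.trans ff_int12
  have h : IntervalIntegrable ff MeasureTheory.volume (1/2) (3/2) := by
    apply h02.mono_set
    rw [Set.uIcc_of_le (by norm_num), Set.uIcc_of_le (by norm_num)]
    apply Set.Icc_subset_Icc <;> norm_num
  have h2 := h.comp_add_right (1/2)
  norm_num at h2
  exact h2

lemma J_eq_zero : (∫ x in (0:ℝ)..1, ff x) = 0 := by
  set J := ∫ x in (0:ℝ)..1, ff x with hJ
  have hK : (∫ x in (0:ℝ)..1, ff (x + 1/2)) = J := by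
    rw [intervalIntegral.integral_comp_add_right]
    norm_num
    have := ff_periodic.intervalIntegral_add_eq (1/2 : ℝ) 0
    norm_num at this
    exact this
  have h02 : (∫ x in (0:ℝ)..2, ff x) = 2 * J := by
    rw [← intervalIntegral.integral_add_adjacent_intervals ff_int ff_int12]
    have h12 : (∫ x in (1:ℝ)..2, ff x) = J := by
      have := ff_periodic.intervalIntegral_add_eq (1 : ℝ) 0
      norm_num at this
      exact this
    rw [h12]; ring
  have hdouble : (∫ x in (0:ℝ)..1, ff (2 * x)) = J := by
    rw [intervalIntegral.integral_comp_mul_left ff (by norm_num : (2:ℝ) ≠ 0)]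
    norm_num [h02]
    linarith
  have hsplit : (∫ x in (0:ℝ)..1, ff (2 * x))
      = ∫ x in (0:ℝ)..1, (ff x + ff (x + 1/2)) := by
    apply intervalIntegral.integral_congr_ae
    have h1 : ∀ᵐ x : ℝ, x ≠ 1 := MeasureTheory.measure_eq_zero_iff_ae_notMem.mp
      (MeasureTheory.measure_singleton 1)
    have h2 : ∀ᵐ x : ℝ, x ≠ 1/2 := MeasureTheory.measure_eq_zero_iff_ae_notMem.mp
      (MeasureTheory.measure_singleton (1/2))
    filter_upwards [h1, h2] with x hx1 hx2 hxm
    rw [Set.uIoc_of_le zero_le_one] at hxm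
    set u := Complex.exp (2 * π * Complex.I * x) with hu
    have hsq : Complex.exp (2 * π * Complex.I * (2*x : ℝ)) = u ^ 2 := by
      rw [hu, ← Complex.exp_nat_mul]
      congr 1
      push_cast
      ring
    have hu1 : u ≠ 1 := by
      intro h
      obtain ⟨n, hn⟩ := exp_eq_one_int h
      have hn0 : (0:ℝ) < n := hn ▸ hxm.1
      have hn1 : (n:ℝ) < 1 := lt_of_le_of_ne (hn ▸ hxm.2) (fun he => hx1 (hn.trans he))
      have : (0:ℤ) < n := by exact_mod_cast hn0
      have : n < 1 := by exact_mod_cast hn1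
      omega
    have hu2 : u ≠ -1 := by
      intro h
      have hsq1 : Complex.exp (2*π*Complex.I*(2*x:ℝ)) = 1 := by
        rw [hsq, h]; ring
      obtain ⟨n, hn⟩ := exp_eq_one_int hsq1
      have hn0 : (0:ℝ) < n := by rw [← hn]; linarith [hxm.1]
      have hn2 : (n:ℝ) ≤ 2 := by rw [← hn]; linarith [hxm.2]
      have h0 : (0:ℤ) < n := by exact_mod_cast hn0
      have h2' : n ≤ 2 := by exact_mod_cast hn2
      have hne1 : n ≠ 1 := by
        intro he
        apply hx2
        rw [he] at hn
        push_cast at hn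
        linarith
      have hne2 : n ≠ 2 := by
        intro he
        apply hx1
        rw [he] at hn
        push_cast at hn
        linarith
      omega
    have hshift : Complex.exp (2 * π * Complex.I * (x + 1/2 : ℝ)) = -u := by
      have he : Complex.exp (2*(π:ℂ)*Complex.I*((x+1/2:ℝ):ℂ))
          = Complex.exp (2*(π:ℂ)*Complex.I*(x:ℝ)) * Complex.exp (π*Complex.I) := by
        rw [← Complex.exp_add]
        congr 1
        push_cast
        ring
      rw [he, Complex.exp_pi_mul_I]
      ring
    have hfact : u^2 - 1 = (u - 1) * (u + 1) := by ring
    show ff (2*x) = ff x + ff (x + 1/2)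
    unfold ff
    rw [hsq, hshift, hfact, norm_mul, show -u - 1 = -(u+1) by ring, norm_neg, ← hu]
    rw [Real.log_mul (by simpa [sub_eq_zero] using hu1) (by
      simp only [ne_eq, norm_eq_zero]
      intro h
      exact hu2 (by linear_combination h))]
  rw [hsplit, intervalIntegral.integral_add ff_int ff_shift_int, hK] at hdouble
  linarith

theorem stmt15 (y : ℂ) :
    (∫ x in (0 : ℝ)..1,
      Real.log (‖Complex.exp (2 * π * Complex.I * x) - y‖)) =
      max (Real.log (‖y‖)) 0 := by
  rcases lt_trichotomy (‖y‖) 1 with hy | hy | hy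
  · -- |y| < 1
    have hmax : max (Real.log (‖y‖)) 0 = 0 :=
      max_eq_right (Real.log_nonpos (norm_nonneg y) (le_of_lt hy))
    rw [hmax]
    have hpt : ∀ x ∈ Set.uIcc (0:ℝ) 1,
        Real.log (‖Complex.exp (2 * π * Complex.I * x) - y‖)
        = (fun u : ℝ => Real.log (‖1 - y * Complex.exp (2 * π * Complex.I * u)‖)) (1 - x) := by
      intro x _
      simp only
      congr 1
      have hfac : Complex.exp (2 * π * Complex.I * x) - y
          = Complex.exp (2 * π * Complex.I * x) * (1 - y * Complex.exp (2 * π * Complex.I * ((1 - x : ℝ) : ℂ))) := by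
        rw [mul_sub, mul_one, mul_comm (y) _, ← mul_assoc, ← Complex.exp_add]
        rw [show 2 * (π:ℂ) * Complex.I * (x:ℝ) + 2 * π * Complex.I * ((1 - x : ℝ):ℂ)
          = 2 * π * Complex.I by push_cast; ring, Complex.exp_two_pi_mul_I, one_mul]
      rw [hfac, norm_mul, Complex.norm_exp]
      rw [show (2 * (π:ℂ) * Complex.I * (x:ℝ)).re = 0 by simp [Complex.mul_re, Complex.mul_im]]
      simp
    rw [intervalIntegral.integral_congr hpt]
    rw [intervalIntegral.integral_comp_sub_left
      (fun u : ℝ => Real.log (‖1 - y * Complex.exp (2 * π * Complex.I * u)‖)) 1]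
    norm_num
    exact circle_avg_log y hy
  · -- |y| = 1
    have hmax : max (Real.log (‖y‖)) 0 = 0 := by rw [hy]; simp
    rw [hmax]
    set β := y.arg / (2 * π) with hβ
    have hy2 : y = Complex.exp (2 * π * Complex.I * (β : ℝ)) := by
      have := Complex.norm_mul_exp_arg_mul_I y
      rw [hy] at this
      rw [show 2 * (π:ℂ) * Complex.I * (β:ℝ) = (y.arg : ℂ) * Complex.I by
        rw [hβ]; push_cast; field_simp [Real.pi_ne_zero]]
      simpa using this.symm
    have hpt : ∀ x ∈ Set.uIcc (0:ℝ) 1,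
        Real.log (‖Complex.exp (2 * π * Complex.I * x) - y‖) = ff (x - β) := by
      intro x _
      unfold ff
      congr 1
      have hfac : Complex.exp (2 * π * Complex.I * x) - y
          = y * (Complex.exp (2 * π * Complex.I * ((x - β : ℝ):ℂ)) - 1) := by
        rw [mul_sub, mul_one, hy2, ← Complex.exp_add]
        congr 2
        push_cast
        ring
      rw [hfac, norm_mul, hy]
      simp
    rw [intervalIntegral.integral_congr hpt,
      intervalIntegral.integral_comp_sub_right _ β]
    have := ff_periodic.intervalIntegral_add_eq (0 - β) 0
    norm_num at this ⊢
    rw [show (1:ℝ) - β = -β + 1 by ring, this]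
    exact J_eq_zero
  · -- |y| > 1
    have hy0 : y ≠ 0 := by
      intro h; rw [h] at hy; simp at hy; linarith
    set w := y⁻¹ with hw
    have hw1 : ‖w‖ < 1 := by
      rw [hw, norm_inv]
      rw [inv_lt_one_iff₀]
      right; exact hy
    have hmax : max (Real.log (‖y‖)) 0 = Real.log (‖y‖) :=
      max_eq_left (le_of_lt (Real.log_pos hy))
    rw [hmax]
    have hne : ∀ x : ℝ, 1 - w * Complex.exp (2 * π * Complex.I * x) ≠ 0 := by
      intro x h
      have h2 : ‖w * Complex.exp (2 * π * Complex.I * x)‖ = 1 := by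
        have : w * Complex.exp (2 * π * Complex.I * x) = 1 := by linear_combination -h
        rw [this]; simp
      rw [norm_mul, Complex.norm_exp,
        show (2 * (π:ℂ) * Complex.I * (x:ℝ)).re = 0 by simp [Complex.mul_re, Complex.mul_im]] at h2
      simp at h2
      rw [h2] at hw1
      linarith
    have hpt : ∀ x ∈ Set.uIcc (0:ℝ) 1,
        Real.log (‖Complex.exp (2 * π * Complex.I * x) - y‖)
        = Real.log (‖y‖) + Real.log (‖1 - w * Complex.exp (2 * π * Complex.I * x)‖) := by
      intro x _
      have hfac : Complex.exp (2 * π * Complex.I * x) - y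
          = (-y) * (1 - w * Complex.exp (2 * π * Complex.I * x)) := by
        rw [hw]
        field_simp
        ring
      rw [hfac, norm_mul, norm_neg,
        Real.log_mul (by simpa using hy0) (by
        simpa [sub_eq_zero] using hne x)]
    rw [intervalIntegral.integral_congr hpt]
    have hcont : Continuous fun x : ℝ =>
        Real.log (‖1 - w * Complex.exp (2 * π * Complex.I * x)‖) := by
      rw [continuous_iff_continuousAt]
      intro x
      exact (Real.continuousAt_log (by simpa [sub_eq_zero] using hne x)).comp
        (continuous_norm.comp (by fun_prop)).continuousAt
    rw [intervalIntegral.integral_add (intervalIntegrable_const) (hcont.intervalIntegrable 0 1),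
      circle_avg_log w hw1]
    simp
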